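/- A square matrix A over the tropical semiring is tropically singular (the maximum in its tropical determinant is attained by at least two distinct permutations) if and only if its column vectors are tropically linearly dependent, meaning there exist scalars α_0,...,α_n in ℝ ∪ {-∞}, not all -∞, such that for every row index j the maximum of (α_i + a_{ji}) over i is attained at least twice. -/

import Mathlib

/-- Tropical (max-plus) determinant of a square matrix with entries in ℝ ∪ {-∞}. -/
noncomputable def tropDet {m : ℕ} (A : Matrix (Fin m) (Fin m) (WithBot ℝ)) : WithBot ℝ :=
  Finset.univ.sup fun π : Equiv.Perm (Fin m) => ∑ i, A i (π i)

/-- A square tropical matrix is tropically singular if the maximum in its tropical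
determinant is attained by at least two distinct permutations. -/
def TropSingular {m : ℕ} (A : Matrix (Fin m) (Fin m) (WithBot ℝ)) : Prop :=
  ∃ π σ : Equiv.Perm (Fin m), π ≠ σ ∧
    (∑ i, A i (π i)) = tropDet A ∧ (∑ i, A i (σ i)) = tropDet A

namespace TropAux

open Finset

variable {N : ℕ}

/-- The sup of `α i + A j i` over columns `i`, for row `j`. -/
noncomputable def rowSup (A : Matrix (Fin N) (Fin N) (WithBot ℝ))
    (α : Fin N → WithBot ℝ) (j : Fin N) : WithBot ℝ :=
  Finset.univ.sup fun i => α i + A j i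

theorem le_rowSup (A : Matrix (Fin N) (Fin N) (WithBot ℝ)) (α : Fin N → WithBot ℝ)
    (j i : Fin N) : α i + A j i ≤ rowSup A α j :=
  Finset.le_sup (f := fun i => α i + A j i) (Finset.mem_univ i)

open Classical in
/-- Tropical cofactor: best value of an `R`-saturating partial matching into `S \ {i}`. -/
noncomputable def cof (A : Matrix (Fin N) (Fin N) (WithBot ℝ)) (R S : Finset (Fin N))
    (i : Fin N) : WithBot ℝ :=
  Finset.univ.sup fun f : Fin N → Fin N =>
    if Set.InjOn f ↑R ∧ ∀ j ∈ R, f j ∈ S ∧ f j ≠ i then ∑ j ∈ R, A j (f j) else ⊥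

theorem le_cof (A : Matrix (Fin N) (Fin N) (WithBot ℝ)) {R S : Finset (Fin N)} {i : Fin N}
    {f : Fin N → Fin N} (h1 : Set.InjOn f ↑R) (h2 : ∀ j ∈ R, f j ∈ S ∧ f j ≠ i) :
    ∑ j ∈ R, A j (f j) ≤ cof A R S i := by
  classical
  unfold cof
  refine le_trans (le_of_eq ?_) (Finset.le_sup (Finset.mem_univ f))
  rw [if_pos ⟨h1, h2⟩]

theorem cof_spec (A : Matrix (Fin N) (Fin N) (WithBot ℝ)) {R S : Finset (Fin N)} {i : Fin N}
    (h : cof A R S i ≠ ⊥) :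
    ∃ f : Fin N → Fin N, Set.InjOn f ↑R ∧ (∀ j ∈ R, f j ∈ S ∧ f j ≠ i) ∧
      cof A R S i = ∑ j ∈ R, A j (f j) := by
  classical
  unfold cof at h ⊢
  obtain ⟨f, -, hf⟩ := Finset.exists_mem_eq_sup (Finset.univ : Finset (Fin N → Fin N))
    ⟨id, Finset.mem_univ id⟩ (fun f : Fin N → Fin N =>
      if Set.InjOn f ↑R ∧ ∀ j ∈ R, f j ∈ S ∧ f j ≠ i then ∑ j ∈ R, A j (f j) else ⊥)
  by_cases hP : Set.InjOn f ↑R ∧ ∀ j ∈ R, f j ∈ S ∧ f j ≠ i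
  · exact ⟨f, hP.1, hP.2, by rw [hf, if_pos hP]⟩
  · rw [hf, if_neg hP] at h; exact absurd rfl h

/-- The column-extension of the cofactor vector by `⊥` off `S`. -/
noncomputable def cofVec (A : Matrix (Fin N) (Fin N) (WithBot ℝ)) (R S : Finset (Fin N)) :
    Fin N → WithBot ℝ :=
  fun i => if i ∈ S then cof A R S i else ⊥

/-- Tropical Cramer exchange: if the row sup in row `j₀ ∈ R` (w.r.t. the cofactor vector)
is attained at `i₁` with non-`⊥` value, it is attained at a second column as well. -/
theorem cramer (A : Matrix (Fin N) (Fin N) (WithBot ℝ)) {R S : Finset (Fin N)}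
    {j₀ : Fin N} (hj₀ : j₀ ∈ R) {i₁ : Fin N}
    (hmax : cofVec A R S i₁ + A j₀ i₁ = rowSup A (cofVec A R S) j₀)
    (hbot : cofVec A R S i₁ + A j₀ i₁ ≠ ⊥) :
    ∃ i₂, i₂ ≠ i₁ ∧ cofVec A R S i₂ + A j₀ i₂ = rowSup A (cofVec A R S) j₀ := by
  classical
  have hi₁S : i₁ ∈ S := by
    by_contra hS
    exact hbot (by simp [cofVec, hS])
  have hcof1 : cof A R S i₁ ≠ ⊥ := by
    intro hb
    exact hbot (by simp [cofVec, hi₁S, hb])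
  obtain ⟨f, hinj, hfS, hfval⟩ := cof_spec A hcof1
  set i₂ := f j₀ with hi₂
  have hi₂S : i₂ ∈ S := (hfS j₀ hj₀).1
  have hi₂ne : i₂ ≠ i₁ := (hfS j₀ hj₀).2
  -- exchanged matching
  set f' : Fin N → Fin N := fun j => if j = j₀ then i₁ else f j with hf'
  have hf'j₀ : f' j₀ = i₁ := if_pos rfl
  have hf'ne : ∀ j, j ≠ j₀ → f' j = f j := fun j h => if_neg h
  have hinj' : Set.InjOn f' ↑R := by
    intro a ha b hb hab
    by_cases haj : a = j₀ <;> by_cases hbj : b = j₀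
    · rw [haj, hbj]
    · exfalso
      rw [haj, hf'j₀, hf'ne b hbj] at hab
      exact (hfS b hb).2 hab.symm
    · exfalso
      rw [hbj, hf'j₀, hf'ne a haj] at hab
      exact (hfS a ha).2 hab
    · rw [hf'ne a haj, hf'ne b hbj] at hab
      exact hinj ha hb hab
  have hf'S : ∀ j ∈ R, f' j ∈ S ∧ f' j ≠ i₂ := by
    intro j hj
    by_cases hjj : j = j₀
    · rw [hjj, hf'j₀]
      exact ⟨hi₁S, fun h => hi₂ne h.symm⟩
    · rw [hf'ne j hjj]
      refine ⟨(hfS j hj).1, fun h => hjj (hinj hj hj₀ (h.trans hi₂))⟩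
  -- the sum identity
  have hsum : (∑ j ∈ R, A j (f' j)) + A j₀ i₂ = (∑ j ∈ R, A j (f j)) + A j₀ i₁ := by
    have e1 : (∑ j ∈ R, A j (f' j)) = A j₀ i₁ + ∑ j ∈ R.erase j₀, A j (f' j) := by
      rw [← Finset.add_sum_erase R (fun j => A j (f' j)) hj₀, hf'j₀]
    have e2 : (∑ j ∈ R, A j (f j)) = A j₀ i₂ + ∑ j ∈ R.erase j₀, A j (f j) := by
      rw [← Finset.add_sum_erase R (fun j => A j (f j)) hj₀]
    have e3 : (∑ j ∈ R.erase j₀, A j (f' j)) = ∑ j ∈ R.erase j₀, A j (f j) :=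
      Finset.sum_congr rfl fun j hj => by rw [hf'ne j (Finset.mem_erase.1 hj).1]
    rw [e1, e2, e3]
    rw [add_comm (A j₀ i₁) _, add_assoc, add_comm (A j₀ i₁) _, ← add_assoc, add_comm (A j₀ i₂) _]
  -- conclude
  have hle : cof A R S i₁ + A j₀ i₁ ≤ cof A R S i₂ + A j₀ i₂ := by
    calc cof A R S i₁ + A j₀ i₁ = (∑ j ∈ R, A j (f j)) + A j₀ i₁ := by rw [hfval]
    _ = (∑ j ∈ R, A j (f' j)) + A j₀ i₂ := hsum.symm
    _ ≤ cof A R S i₂ + A j₀ i₂ := add_le_add_left (le_cof A hinj' hf'S) _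
  refine ⟨i₂, hi₂ne, le_antisymm (le_rowSup A _ j₀ i₂) ?_⟩
  calc rowSup A (cofVec A R S) j₀ = cofVec A R S i₁ + A j₀ i₁ := hmax.symm
  _ ≤ cofVec A R S i₂ + A j₀ i₂ := by
      simpa [cofVec, hi₁S, hi₂S] using hle


/-- Tropical dependence of the columns `S` against the rows `R`. -/
def Dep (A : Matrix (Fin N) (Fin N) (WithBot ℝ)) (R S : Finset (Fin N)) : Prop :=
  ∃ α : Fin N → WithBot ℝ, (∃ i ∈ S, α i ≠ ⊥) ∧ (∀ i, i ∉ S → α i = ⊥) ∧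
    ∀ j ∈ R, ∃ i₁ i₂ : Fin N, i₁ ≠ i₂ ∧
      α i₁ + A j i₁ = rowSup A α j ∧ α i₂ + A j i₂ = rowSup A α j

/-- From the failure of a system of distinct representatives, extract a minimal
Hall violator. -/
theorem hall_out (E : Finset (Fin N)) (t0 : Fin N → Finset (Fin N))
    (hfail : ¬ ∃ g : {x // x ∈ E} → Fin N, Function.Injective g ∧ ∀ i, g i ∈ t0 i.1) :
    ∃ s : Finset (Fin N), s ⊆ E ∧ s.Nonempty ∧ (s.biUnion t0).card + 1 = s.card := by
  classical
  set V : Finset (Finset (Fin N)) :=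
    E.powerset.filter (fun s => (s.biUnion t0).card < s.card) with hV
  have hVne : V.Nonempty := by
    by_contra hVe
    rw [Finset.not_nonempty_iff_eq_empty] at hVe
    apply hfail
    apply (Finset.all_card_le_biUnion_card_iff_exists_injective
      (fun i : {x // x ∈ E} => t0 i.1)).1
    intro s
    have hs0 : (s.image Subtype.val) ∉ V := by rw [hVe]; exact Finset.notMem_empty _
    have hsub : (s.image Subtype.val) ⊆ E := by
      intro x hx
      obtain ⟨y, -, rfl⟩ := Finset.mem_image.1 hx
      exact y.2
    have := Finset.mem_filter.not.1 hs0
    push_neg at this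
    have hle := this (Finset.mem_powerset.2 hsub)
    rwa [Finset.image_biUnion, Finset.card_image_of_injective _ Subtype.val_injective] at hle
  obtain ⟨s, hsV, hmin⟩ := Finset.exists_min_image V Finset.card hVne
  have hsE : s ⊆ E := Finset.mem_powerset.1 (Finset.mem_filter.1 hsV).1
  have hslt : (s.biUnion t0).card < s.card := (Finset.mem_filter.1 hsV).2
  have hsne : s.Nonempty := Finset.card_pos.1 (lt_of_le_of_lt (Nat.zero_le _) hslt)
  obtain ⟨x, hx⟩ := hsne
  have herase : ¬ ((s.erase x).biUnion t0).card < (s.erase x).card := by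
    intro hlt
    have : s.erase x ∈ V := Finset.mem_filter.2
      ⟨Finset.mem_powerset.2 ((Finset.erase_subset _ _).trans hsE), hlt⟩
    have := hmin _ this
    rw [Finset.card_erase_of_mem hx] at this
    omega
  push_neg at herase
  have hmono : ((s.erase x).biUnion t0).card ≤ (s.biUnion t0).card :=
    Finset.card_le_card (Finset.biUnion_subset_biUnion_of_subset_left _ (Finset.erase_subset _ _))
  rw [Finset.card_erase_of_mem hx] at herase
  refine ⟨s, hsE, ⟨x, hx⟩, ?_⟩
  have hcard1 : 1 ≤ s.card := Finset.card_pos.2 ⟨x, hx⟩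
  omega

/-- The Hall-violator branch: with no finite `R`-saturating matching into `E`, we can
produce a dependence supported inside `E`, assuming dependences at all smaller sizes. -/
theorem dep_no_match (A : Matrix (Fin N) (Fin N) (WithBot ℝ)) (u v : Fin N) (huv : u ≠ v)
    (R E : Finset (Fin N)) (hE : E.card ≤ R.card)
    (hfail : ¬ ∃ g : {x // x ∈ E} → Fin N, Function.Injective g ∧
      ∀ i, g i ∈ R.filter (fun j => A j i.1 ≠ ⊥))
    (hdep : ∀ R' S' : Finset (Fin N), S'.card = R'.card + 1 → R'.card < R.card → Dep A R' S') :
    ∃ α : Fin N → WithBot ℝ, (∃ i ∈ E, α i ≠ ⊥) ∧ (∀ i, i ∉ E → α i = ⊥) ∧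
      ∀ j ∈ R, ∃ i₁ i₂ : Fin N, i₁ ≠ i₂ ∧
        α i₁ + A j i₁ = rowSup A α j ∧ α i₂ + A j i₂ = rowSup A α j := by
  classical
  set t0 : Fin N → Finset (Fin N) := fun i => R.filter (fun j => A j i ≠ ⊥) with ht0
  obtain ⟨s, hsE, hsne, hscard⟩ := hall_out E t0 hfail
  set R' : Finset (Fin N) := s.biUnion t0 with hR'
  have hR'R : R' ⊆ R := Finset.biUnion_subset.2 fun i _ => Finset.filter_subset _ _
  have hR'lt : R'.card < R.card := by
    have h1 : s.card ≤ E.card := Finset.card_le_card hsE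
    omega
  obtain ⟨α, hsupp, hout, hrows⟩ := hdep R' s (by omega) hR'lt
  refine ⟨α, ?_, ?_, ?_⟩
  · obtain ⟨i, his, hib⟩ := hsupp
    exact ⟨i, hsE his, hib⟩
  · intro i hi
    exact hout i (fun h => hi (hsE h))
  · intro j hj
    by_cases hjR' : j ∈ R'
    · exact hrows j hjR'
    · -- all terms in this row are ⊥
      have hterm : ∀ i : Fin N, α i + A j i = ⊥ := by
        intro i
        by_cases his : i ∈ s
        · have hAji : A j i = ⊥ := by
            by_contra hA
            exact hjR' (Finset.mem_biUnion.2 ⟨i, his, Finset.mem_filter.2 ⟨hj, hA⟩⟩)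
          rw [hAji, WithBot.add_bot]
        · rw [hout i his, WithBot.bot_add]
      have hsup : rowSup A α j = ⊥ := by
        refine le_bot_iff.1 (Finset.sup_le fun i _ => le_of_eq (hterm i))
      exact ⟨u, v, huv, by rw [hterm u, hsup], by rw [hterm v, hsup]⟩

/-- Main dependence lemma: whenever `|S| = |R| + 1`, the columns `S` are
dependent against the rows `R`. -/
theorem dep_all (A : Matrix (Fin N) (Fin N) (WithBot ℝ)) :
    ∀ m (R S : Finset (Fin N)), R.card = m → S.card = R.card + 1 → Dep A R S := by
  classical
  intro m
  induction m using Nat.strong_induction_on with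
  | _ m ih =>
    intro R S hm hcard
    by_cases hc : ∃ i ∈ S, cof A R S i ≠ ⊥
    · -- cofactor construction plus tropical Cramer
      refine ⟨cofVec A R S, ?_, ?_, ?_⟩
      · obtain ⟨i, hiS, hib⟩ := hc
        exact ⟨i, hiS, by simpa [cofVec, hiS] using hib⟩
      · intro i hi; simp [cofVec, hi]
      · intro j hj
        obtain ⟨i₁, -, hmax⟩ := Finset.exists_mem_eq_sup (Finset.univ : Finset (Fin N))
          ⟨j, Finset.mem_univ j⟩ (fun i => cofVec A R S i + A j i)
        have hmax' : cofVec A R S i₁ + A j i₁ = rowSup A (cofVec A R S) j := hmax.symm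
        by_cases hbot : cofVec A R S i₁ + A j i₁ = ⊥
        · -- row sup is ⊥; any two distinct columns of S work
          have hsup : rowSup A (cofVec A R S) j = ⊥ := hmax' ▸ hbot
          have h2 : 1 < S.card := by
            have : 1 ≤ R.card := Finset.card_pos.2 ⟨j, hj⟩
            omega
          obtain ⟨a, haS, b, hbS, hab⟩ := Finset.one_lt_card.1 h2
          have hta : cofVec A R S a + A j a = ⊥ :=
            le_bot_iff.1 (hsup ▸ le_rowSup A _ j a)
          have htb : cofVec A R S b + A j b = ⊥ :=
            le_bot_iff.1 (hsup ▸ le_rowSup A _ j b)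
          exact ⟨a, b, hab, by rw [hta, hsup], by rw [htb, hsup]⟩
        · obtain ⟨i₂, hne, h2⟩ := cramer A hj hmax' hbot
          exact ⟨i₁, i₂, fun h => hne h.symm, hmax', h2⟩
    · -- all cofactors are ⊥: Hall violator recursion
      push_neg at hc
      -- R is nonempty
      have hRne : R.Nonempty := by
        by_contra hRe
        rw [Finset.not_nonempty_iff_eq_empty] at hRe
        obtain ⟨i₀, hi₀⟩ := Finset.card_pos.1 (by omega : 0 < S.card)
        have hb := hc i₀ hi₀
        have h0 : (0 : WithBot ℝ) ≤ cof A R S i₀ := by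
          have := le_cof A (f := id) (R := R) (S := S) (i := i₀)
            (by rw [hRe]; simp)
            (by rw [hRe]; intro j hj; exact absurd hj (Finset.notMem_empty j))
          simpa [hRe] using this
        rw [hb] at h0
        exact absurd (le_bot_iff.1 h0) (by simp)
      obtain ⟨i₀, hi₀S⟩ : S.Nonempty := Finset.card_pos.1 (by omega)
      set E : Finset (Fin N) := S.erase i₀ with hEdef
      have hEcard : E.card = R.card := by
        rw [hEdef, Finset.card_erase_of_mem hi₀S]; omega
      -- no matching into E, else the cofactor at i₀ would be finite
      have hfail : ¬ ∃ g : {x // x ∈ E} → Fin N, Function.Injective g ∧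
          ∀ i, g i ∈ R.filter (fun j => A j i.1 ≠ ⊥) := by
        rintro ⟨g, hginj, hgmem⟩
        -- image of g is exactly R
        have himg : (Finset.univ : Finset {x // x ∈ E}).image g = R := by
          apply Finset.eq_of_subset_of_card_le
          · intro j hjim
            obtain ⟨i, -, rfl⟩ := Finset.mem_image.1 hjim
            exact (Finset.mem_filter.1 (hgmem i)).1
          · rw [Finset.card_image_of_injective _ hginj]
            simp [Fintype.card_coe, hEcard]
        set f : Fin N → Fin N := fun j =>
          if h : ∃ i : {x // x ∈ E}, g i = j then (h.choose : {x // x ∈ E}).1 else i₀ with hfdef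
        have hfspec : ∀ j ∈ R, ∃ i : {x // x ∈ E}, g i = j ∧ f j = i.1 := by
          intro j hjR
          have : j ∈ (Finset.univ : Finset {x // x ∈ E}).image g := himg ▸ hjR
          obtain ⟨i, -, hgi⟩ := Finset.mem_image.1 this
          have hex : ∃ i : {x // x ∈ E}, g i = j := ⟨i, hgi⟩
          exact ⟨hex.choose, hex.choose_spec, dif_pos hex⟩
        have hinj : Set.InjOn f ↑R := by
          intro a ha b hb hab
          obtain ⟨ia, hga, hfa⟩ := hfspec a ha
          obtain ⟨ib, hgb, hfb⟩ := hfspec b hb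
          rw [hfa, hfb] at hab
          rw [← hga, ← hgb, Subtype.ext hab]
        have hfS : ∀ j ∈ R, f j ∈ S ∧ f j ≠ i₀ := by
          intro j hjR
          obtain ⟨i, -, hfj⟩ := hfspec j hjR
          rw [hfj]
          exact ⟨Finset.mem_of_mem_erase i.2, Finset.ne_of_mem_erase i.2⟩
        have hsum : (∑ j ∈ R, A j (f j)) ≠ ⊥ := by
          rw [Ne, WithBot.sum_eq_bot_iff]
          rintro ⟨j, hjR, hbot⟩
          obtain ⟨i, hgi, hfj⟩ := hfspec j hjR
          have := (Finset.mem_filter.1 (hgmem i)).2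
          rw [hgi] at this
          exact this (hfj ▸ hbot)
        exact hsum (le_bot_iff.1 ((le_cof A hinj hfS).trans
          (le_of_eq (hc i₀ hi₀S))))
      obtain ⟨a, haS, b, hbS, hab⟩ := Finset.one_lt_card.1
        (by have : 1 ≤ R.card := Finset.card_pos.2 hRne; omega : 1 < S.card)
      obtain ⟨α, hsupp, hout, hrows⟩ := dep_no_match A a b hab R E (by omega) hfail
        (fun R' S' h1 h2 => ih R'.card (by omega) R' S' rfl h1)
      refine ⟨α, ?_, ?_, hrows⟩
      · obtain ⟨i, hiE, hib⟩ := hsupp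
        exact ⟨i, Finset.mem_of_mem_erase hiE, hib⟩
      · intro i hiS
        exact hout i (fun h => hiS (Finset.mem_of_mem_erase h))

/-- Forward direction, degenerate case: if the tropical determinant is `⊥`,
the columns are dependent. -/
theorem dep_of_det_bot {N : ℕ} (A : Matrix (Fin N) (Fin N) (WithBot ℝ))
    (hD : (Finset.univ.sup fun π : Equiv.Perm (Fin N) => ∑ i, A i (π i)) = ⊥)
    (u v : Fin N) (huv : u ≠ v) :
    ∃ α : Fin N → WithBot ℝ, (∃ i, α i ≠ ⊥) ∧
      ∀ j : Fin N, ∃ i₁ i₂ : Fin N, i₁ ≠ i₂ ∧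
        α i₁ + A j i₁ = rowSup A α j ∧ α i₂ + A j i₂ = rowSup A α j := by
  classical
  set t0 : Fin N → Finset (Fin N) :=
    fun i => (Finset.univ : Finset (Fin N)).filter (fun j => A j i ≠ ⊥) with ht0
  have hfail : ¬ ∃ g : {x // x ∈ (Finset.univ : Finset (Fin N))} → Fin N,
      Function.Injective g ∧
      ∀ i, g i ∈ (Finset.univ : Finset (Fin N)).filter (fun j => A j i.1 ≠ ⊥) := by
    rintro ⟨g, hginj, hgmem⟩
    let e : {x // x ∈ (Finset.univ : Finset (Fin N))} ≃ Fin N :=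
      Equiv.subtypeUnivEquiv (fun x => Finset.mem_univ x)
    have hg'inj : Function.Injective (fun i => g (e.symm i)) :=
      hginj.comp e.symm.injective
    let τ : Equiv.Perm (Fin N) :=
      Equiv.ofBijective _ (Finite.injective_iff_bijective.1 hg'inj)
    have hterm : ∀ i, A (τ i) i ≠ ⊥ := by
      intro i
      have := (Finset.mem_filter.1 (hgmem (e.symm i))).2
      simpa [τ, e, Equiv.ofBijective_apply] using this
    have hne : (∑ j, A j (τ.symm j)) ≠ ⊥ := by
      rw [Ne, WithBot.sum_eq_bot_iff]
      rintro ⟨j, -, hb⟩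
      have := hterm (τ.symm j)
      rw [Equiv.apply_symm_apply] at this
      exact this hb
    exact hne (le_bot_iff.1 (hD ▸ Finset.le_sup
      (f := fun π : Equiv.Perm (Fin N) => ∑ i, A i (π i)) (Finset.mem_univ τ.symm)))
  obtain ⟨s, -, hsne, hscard⟩ := hall_out Finset.univ t0 hfail
  obtain ⟨α, hsupp, hout, hrows⟩ := dep_all A (s.biUnion t0).card (s.biUnion t0) s rfl
    (by omega)
  refine ⟨α, ?_, ?_⟩
  · obtain ⟨i, -, hib⟩ := hsupp
    exact ⟨i, hib⟩
  · intro j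
    by_cases hjR : j ∈ s.biUnion t0
    · exact hrows j hjR
    · have hterm : ∀ i : Fin N, α i + A j i = ⊥ := by
        intro i
        by_cases his : i ∈ s
        · have hAji : A j i = ⊥ := by
            by_contra hA
            exact hjR (Finset.mem_biUnion.2 ⟨i, his,
              Finset.mem_filter.2 ⟨Finset.mem_univ j, hA⟩⟩)
          rw [hAji, WithBot.add_bot]
        · rw [hout i his, WithBot.bot_add]
      have hsup : rowSup A α j = ⊥ :=
        le_bot_iff.1 (Finset.sup_le fun i _ => le_of_eq (hterm i))
      exact ⟨u, v, huv, by rw [hterm u, hsup], by rw [hterm v, hsup]⟩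

/-- Forward direction, main case: if the tropical determinant is finite and attained
twice, the cofactor vector (w.r.t. deleting the row where the two permutations differ)
is a dependence of the columns. -/
theorem dep_of_singular {N : ℕ} (A : Matrix (Fin N) (Fin N) (WithBot ℝ))
    (π σ : Equiv.Perm (Fin N)) (j₀ : Fin N) (hj₀ : π j₀ ≠ σ j₀)
    (hπ : (∑ i, A i (π i)) = Finset.univ.sup fun ρ : Equiv.Perm (Fin N) => ∑ i, A i (ρ i))
    (hσ : (∑ i, A i (σ i)) = Finset.univ.sup fun ρ : Equiv.Perm (Fin N) => ∑ i, A i (ρ i))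
    (hD : (Finset.univ.sup fun ρ : Equiv.Perm (Fin N) => ∑ i, A i (ρ i)) ≠ ⊥) :
    ∃ α : Fin N → WithBot ℝ, (∃ i, α i ≠ ⊥) ∧
      ∀ j : Fin N, ∃ i₁ i₂ : Fin N, i₁ ≠ i₂ ∧
        α i₁ + A j i₁ = rowSup A α j ∧ α i₂ + A j i₂ = rowSup A α j := by
  classical
  set D : WithBot ℝ := Finset.univ.sup fun ρ : Equiv.Perm (Fin N) => ∑ i, A i (ρ i) with hDdef
  set R : Finset (Fin N) := Finset.univ.erase j₀ with hR
  have hRcard : R.card + 1 = (Finset.univ : Finset (Fin N)).card := by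
    rw [hR, Finset.card_erase_of_mem (Finset.mem_univ j₀)]
    have : 0 < (Finset.univ : Finset (Fin N)).card := Finset.card_pos.2 ⟨j₀, Finset.mem_univ j₀⟩
    omega
  have hcard : (Finset.univ : Finset (Fin N)).card = R.card + 1 := hRcard.symm
  -- the split of a full sum at j₀
  have hsplit : ∀ F : Fin N → WithBot ℝ, (∑ j, F j) = F j₀ + ∑ j ∈ R, F j := by
    intro F
    rw [hR, ← Finset.add_sum_erase Finset.univ F (Finset.mem_univ j₀)]
  -- (a) upper bound
  have ha : ∀ i, cof A R Finset.univ i + A j₀ i ≤ D := by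
    intro i
    by_cases hb : cof A R Finset.univ i = ⊥
    · rw [hb, WithBot.bot_add]; exact bot_le
    obtain ⟨f, hinj, hfS, hfval⟩ := cof_spec A hb
    set F : Fin N → Fin N := fun j => if j = j₀ then i else f j with hF
    have hFj₀ : F j₀ = i := if_pos rfl
    have hFne : ∀ j, j ≠ j₀ → F j = f j := fun j h => if_neg h
    have hmemR : ∀ j, j ≠ j₀ → j ∈ R := fun j h => Finset.mem_erase.2 ⟨h, Finset.mem_univ j⟩
    have hFinj : Function.Injective F := by
      intro a b hab
      by_cases haj : a = j₀ <;> by_cases hbj : b = j₀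
      · rw [haj, hbj]
      · exfalso
        rw [haj, hFj₀, hFne b hbj] at hab
        exact (hfS b (hmemR b hbj)).2 hab.symm
      · exfalso
        rw [hbj, hFj₀, hFne a haj] at hab
        exact (hfS a (hmemR a haj)).2 hab
      · rw [hFne a haj, hFne b hbj] at hab
        exact hinj (hmemR a haj) (hmemR b hbj) hab
    set τ : Equiv.Perm (Fin N) := Equiv.ofBijective F (Finite.injective_iff_bijective.1 hFinj)
      with hτ
    have hsumF : (∑ j, A j (F j)) = A j₀ i + ∑ j ∈ R, A j (f j) := by
      rw [hsplit (fun j => A j (F j)), hFj₀]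
      congr 1
      exact Finset.sum_congr rfl fun j hj => by rw [hFne j (Finset.mem_erase.1 hj).1]
    calc cof A R Finset.univ i + A j₀ i = (∑ j ∈ R, A j (f j)) + A j₀ i := by rw [hfval]
    _ = A j₀ i + ∑ j ∈ R, A j (f j) := add_comm _ _
    _ = ∑ j, A j (F j) := hsumF.symm
    _ = ∑ j, A j (τ j) := rfl
    _ ≤ D := Finset.le_sup (f := fun ρ : Equiv.Perm (Fin N) => ∑ i, A i (ρ i))
        (Finset.mem_univ τ)
  -- (b) attainment at π j₀ and σ j₀
  have hkey : ∀ ρ : Equiv.Perm (Fin N), (∑ i, A i (ρ i)) = D →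
      cof A R Finset.univ (ρ j₀) + A j₀ (ρ j₀) = D := by
    intro ρ hρ
    refine le_antisymm (ha _) ?_
    have hfS : ∀ j ∈ R, ρ j ∈ Finset.univ ∧ ρ j ≠ ρ j₀ := by
      intro j hj
      exact ⟨Finset.mem_univ _, fun h => (Finset.mem_erase.1 hj).1 (ρ.injective h)⟩
    have hinj : Set.InjOn ρ ↑R := fun a _ b _ hab => ρ.injective hab
    have hle := le_cof A hinj hfS
    calc D = ∑ i, A i (ρ i) := hρ.symm
    _ = A j₀ (ρ j₀) + ∑ j ∈ R, A j (ρ j) := hsplit _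
    _ ≤ A j₀ (ρ j₀) + cof A R Finset.univ (ρ j₀) := add_le_add_right hle _
    _ = cof A R Finset.univ (ρ j₀) + A j₀ (ρ j₀) := add_comm _ _
  have hcv : ∀ i, cofVec A R Finset.univ i = cof A R Finset.univ i := by
    intro i; simp [cofVec]
  -- row sup at j₀ equals D
  have hsupj₀ : rowSup A (cofVec A R Finset.univ) j₀ = D := by
    refine le_antisymm (Finset.sup_le fun i _ => ?_) ?_
    · rw [hcv i]; exact ha i
    · calc D = cof A R Finset.univ (π j₀) + A j₀ (π j₀) := (hkey π hπ).symm
      _ = cofVec A R Finset.univ (π j₀) + A j₀ (π j₀) := by rw [hcv]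
      _ ≤ rowSup A (cofVec A R Finset.univ) j₀ := le_rowSup A _ j₀ _
  refine ⟨cofVec A R Finset.univ, ⟨π j₀, ?_⟩, ?_⟩
  · rw [hcv]
    intro hb
    apply hD
    rw [← hkey π hπ, hb, WithBot.bot_add]
  · intro j
    by_cases hjj : j = j₀
    · subst hjj
      refine ⟨π j, σ j, hj₀, ?_, ?_⟩
      · rw [hsupj₀, hcv]; exact hkey π hπ
      · rw [hsupj₀, hcv]; exact hkey σ hσ
    · have hjR : j ∈ R := Finset.mem_erase.2 ⟨hjj, Finset.mem_univ j⟩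
      obtain ⟨i₁, -, hmax⟩ := Finset.exists_mem_eq_sup (Finset.univ : Finset (Fin N))
        ⟨j, Finset.mem_univ j⟩ (fun i => cofVec A R Finset.univ i + A j i)
      have hmax' : cofVec A R Finset.univ i₁ + A j i₁ = rowSup A (cofVec A R Finset.univ) j :=
        hmax.symm
      by_cases hbot : cofVec A R Finset.univ i₁ + A j i₁ = ⊥
      · have hsup : rowSup A (cofVec A R Finset.univ) j = ⊥ := hmax' ▸ hbot
        have hta : ∀ i, cofVec A R Finset.univ i + A j i = ⊥ := fun i =>
          le_bot_iff.1 (hsup ▸ le_rowSup A _ j i)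
        exact ⟨π j₀, σ j₀, hj₀, by rw [hta, hsup], by rw [hta, hsup]⟩
      · obtain ⟨i₂, hne, h2⟩ := cramer A hjR hmax' hbot
        exact ⟨i₁, i₂, fun h => hne h.symm, hmax', h2⟩

/-- Backward direction: a tropical dependence of the columns forces the determinant
to be attained twice. -/
theorem singular_of_dep {N : ℕ} (A : Matrix (Fin N) (Fin N) (WithBot ℝ))
    (α : Fin N → WithBot ℝ) (i0 : Fin N) (hi0 : α i0 ≠ ⊥)
    (hrow : ∀ j : Fin N, ∃ i₁ i₂ : Fin N, i₁ ≠ i₂ ∧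
      α i₁ + A j i₁ = rowSup A α j ∧ α i₂ + A j i₂ = rowSup A α j) :
    TropSingular A := by
  classical
  obtain ⟨π, -, hπ⟩ := Finset.exists_mem_eq_sup (Finset.univ : Finset (Equiv.Perm (Fin N)))
    ⟨1, Finset.mem_univ 1⟩ (fun ρ : Equiv.Perm (Fin N) => ∑ i, A i (ρ i))
  have hπsum : (∑ i, A i (π i)) = tropDet A := hπ.symm
  by_cases hD : tropDet A = ⊥
  · -- everything is ⊥; any two permutations work
    obtain ⟨i₁, i₂, h12, -, -⟩ := hrow (π i0)
    have hall : ∀ ρ : Equiv.Perm (Fin N), (∑ i, A i (ρ i)) = tropDet A := by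
      intro ρ
      refine le_antisymm (Finset.le_sup (f := fun ρ : Equiv.Perm (Fin N) => ∑ i, A i (ρ i))
        (Finset.mem_univ ρ)) ?_
      rw [hD]; exact bot_le
    refine ⟨π, π.trans (Equiv.swap i₁ i₂), ?_, hall π, hall _⟩
    intro h
    have := congrArg (fun e : Equiv.Perm (Fin N) => e (π.symm i₁)) h
    simp only [Equiv.trans_apply, Equiv.apply_symm_apply] at this
    rw [Equiv.swap_apply_left] at this
    exact h12 this
  · have hfin : ∀ j, A j (π j) ≠ ⊥ := by
      intro j hb
      exact hD (hπsum ▸ WithBot.sum_eq_bot_iff.2 ⟨j, Finset.mem_univ j, hb⟩)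
    choose i₁f i₂f hne12 hmax1 hmax2 using hrow
    set h : Fin N → Fin N :=
      fun i => if i₁f (π.symm i) = i then i₂f (π.symm i) else i₁f (π.symm i) with hh
    have hhne : ∀ i, h i ≠ i := by
      intro i
      by_cases hc : i₁f (π.symm i) = i
      · rw [hh]; simp only [hc, if_pos]
        exact fun he => hne12 (π.symm i) (by rw [hc, he])
      · rw [hh]; simp only [if_neg hc]
        exact hc
    have hhmax : ∀ i, α (h i) + A (π.symm i) (h i) = rowSup A α (π.symm i) := by
      intro i
      by_cases hc : i₁f (π.symm i) = i
      · rw [hh]; simp only [hc, if_pos]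
        exact hmax2 (π.symm i)
      · rw [hh]; simp only [if_neg hc]
        exact hmax1 (π.symm i)
    have hstar : ∀ i, α i + A (π.symm i) i ≤ α (h i) + A (π.symm i) (h i) := by
      intro i
      rw [hhmax i]
      exact le_rowSup A α (π.symm i) i
    have hstep : ∀ i, α i ≠ ⊥ → α (h i) ≠ ⊥ := by
      intro i hib hb
      have h1 : α i + A (π.symm i) i ≠ ⊥ := by
        rw [Ne, WithBot.add_eq_bot]
        push_neg
        refine ⟨hib, ?_⟩
        have := hfin (π.symm i)
        rwa [Equiv.apply_symm_apply] at this
      have h2 := hstar i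
      rw [hb, WithBot.bot_add] at h2
      exact h1 (le_bot_iff.1 h2)
    have hiter : ∀ t, α (h^[t] i0) ≠ ⊥ := by
      intro t
      induction t with
      | zero => simpa using hi0
      | succ t iht => rw [Function.iterate_succ_apply']; exact hstep _ iht
    -- find a cycle within the forward orbit of i0
    have hcyc : ∃ c : Fin N, (∃ t, h^[t] i0 = c) ∧ ∃ k, 0 < k ∧ h^[k] c = c := by
      obtain ⟨a, b, hab, heq⟩ := Fintype.exists_ne_map_eq_of_card_lt
        (fun t : Fin (N + 1) => h^[(t : ℕ)] i0) (by simp)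
      rcases lt_trichotomy (a : ℕ) (b : ℕ) with hlt | hEq | hlt
      · refine ⟨h^[(a : ℕ)] i0, ⟨a, rfl⟩, (b : ℕ) - a, by omega, ?_⟩
        rw [← Function.iterate_add_apply, Nat.sub_add_cancel (le_of_lt hlt)]
        exact heq.symm
      · exact absurd (Fin.ext hEq) hab
      · refine ⟨h^[(b : ℕ)] i0, ⟨b, rfl⟩, (a : ℕ) - b, by omega, ?_⟩
        rw [← Function.iterate_add_apply, Nat.sub_add_cancel (le_of_lt hlt)]
        exact heq
    obtain ⟨c, ⟨tc, htc⟩, hPex⟩ := hcyc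
    set k := Nat.find hPex with hkdef
    obtain ⟨hkpos, hkcyc⟩ : 0 < k ∧ h^[k] c = c := Nat.find_spec hPex
    have hk2 : 2 ≤ k := by
      have hk1 : k ≠ 1 := by
        intro h1
        have := hkcyc
        rw [h1, Function.iterate_one] at this
        exact hhne c this
      omega
    set C : Finset (Fin N) := (Finset.range k).image (fun u => h^[u] c) with hC
    have hcC : c ∈ C := Finset.mem_image.2 ⟨0, Finset.mem_range.2 hkpos, rfl⟩
    have hmemC : ∀ x ∈ C, h x ∈ C := by
      intro x hx
      obtain ⟨u, hu, rfl⟩ := Finset.mem_image.1 hx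
      rw [Finset.mem_range] at hu
      have hs := Function.iterate_succ_apply' h u c
      rw [← hs]
      rcases Nat.lt_or_ge (u + 1) k with h1 | h1
      · exact Finset.mem_image.2 ⟨u + 1, Finset.mem_range.2 h1, rfl⟩
      · have h2 : u + 1 = k := by omega
        rw [Nat.succ_eq_add_one, h2, hkcyc]
        exact hcC
    have hCα : ∀ x ∈ C, α x ≠ ⊥ := by
      intro x hx
      obtain ⟨u, -, rfl⟩ := Finset.mem_image.1 hx
      rw [← htc, ← Function.iterate_add_apply]
      exact hiter _
    have hsurjC : ∀ y ∈ C, ∃ x ∈ C, h x = y := by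
      intro y hy
      obtain ⟨u, hu, rfl⟩ := Finset.mem_image.1 hy
      rw [Finset.mem_range] at hu
      rcases Nat.eq_zero_or_pos u with h0 | h0
      · refine ⟨h^[k - 1] c, Finset.mem_image.2 ⟨k - 1, Finset.mem_range.2 (by omega), rfl⟩, ?_⟩
        have hs := Function.iterate_succ_apply' h (k - 1) c
        rw [← hs]
        have h2 : k - 1 + 1 = k := by omega
        rw [Nat.succ_eq_add_one, h2, hkcyc, h0, Function.iterate_zero_apply]
      · refine ⟨h^[u - 1] c, Finset.mem_image.2 ⟨u - 1, Finset.mem_range.2 (by omega), rfl⟩, ?_⟩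
        have hs := Function.iterate_succ_apply' h (u - 1) c
        rw [← hs, Nat.succ_eq_add_one]
        congr 1
        omega
    set g : Fin N → Fin N := fun x => if x ∈ C then h x else x with hg
    have hgC : ∀ x ∈ C, g x = h x := fun x hx => if_pos hx
    have hgnC : ∀ x, x ∉ C → g x = x := fun x hx => if_neg hx
    have hgsurj : Function.Surjective g := by
      intro y
      by_cases hy : y ∈ C
      · obtain ⟨x, hxC, hxy⟩ := hsurjC y hy
        exact ⟨x, by rw [hgC x hxC, hxy]⟩
      · exact ⟨y, hgnC y hy⟩
    set τ : Equiv.Perm (Fin N) := Equiv.ofBijective g (Finite.surjective_iff_bijective.1 hgsurj)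
      with hτ
    have hτap : ∀ x, τ x = g x := fun x => rfl
    refine ⟨π.trans τ, π, ?_, ?_, hπsum⟩
    · intro hEq
      have := congrArg (fun e : Equiv.Perm (Fin N) => e (π.symm c)) hEq
      simp only [Equiv.trans_apply, Equiv.apply_symm_apply] at this
      rw [hτap, hgC c hcC] at this
      exact hhne c this
    · -- the sum along the modified permutation equals the determinant
      have hle : (∑ i, A i ((π.trans τ) i)) ≤ tropDet A :=
        Finset.le_sup (f := fun ρ : Equiv.Perm (Fin N) => ∑ i, A i (ρ i)) (Finset.mem_univ _)
      have hre1 : (∑ j, A j (π j)) = ∑ i, A (π.symm i) i := by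
        rw [← Equiv.sum_comp π (fun i => A (π.symm i) i)]
        exact Finset.sum_congr rfl fun j _ => by rw [Equiv.symm_apply_apply]
      have hre2 : (∑ j, A j ((π.trans τ) j)) = ∑ i, A (π.symm i) (g i) := by
        rw [← Equiv.sum_comp π (fun i => A (π.symm i) (g i))]
        refine Finset.sum_congr rfl fun j _ => ?_
        rw [Equiv.symm_apply_apply]
        rfl
      -- image of C under g is C
      have himg : C.image g = C := by
        apply Finset.eq_of_subset_of_card_le
        · intro y hy
          obtain ⟨x, hxC, rfl⟩ := Finset.mem_image.1 hy
          rw [hgC x hxC]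
          exact hmemC x hxC
        · have hginj : Function.Injective g := τ.injective
          rw [Finset.card_image_of_injective _ hginj]
      have hperm : (∑ i ∈ C, α (g i)) = ∑ i ∈ C, α i := by
        calc (∑ i ∈ C, α (g i)) = ∑ x ∈ C.image g, α x :=
          (Finset.sum_image (fun x _ y _ hxy => τ.injective hxy)).symm
        _ = ∑ i ∈ C, α i := by rw [himg]
      have hsC : (∑ i ∈ C, α i) ≠ ⊥ := by
        rw [Ne, WithBot.sum_eq_bot_iff]
        rintro ⟨i, hiC, hb⟩
        exact hCα i hiC hb
      have hsum2 : (∑ i ∈ C, (α i + A (π.symm i) i)) ≤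
          ∑ i ∈ C, (α (g i) + A (π.symm i) (g i)) := by
        refine Finset.sum_le_sum fun i hi => ?_
        rw [hgC i hi]
        exact hstar i
      rw [Finset.sum_add_distrib, Finset.sum_add_distrib, hperm] at hsum2
      have hkeyC : (∑ i ∈ C, A (π.symm i) i) ≤ ∑ i ∈ C, A (π.symm i) (g i) :=
        (WithBot.add_le_add_iff_left hsC).1 hsum2
      have hgesum : (∑ i, A (π.symm i) i) ≤ ∑ i, A (π.symm i) (g i) := by
        rw [← Finset.sum_sdiff (Finset.subset_univ C),
          ← Finset.sum_sdiff (Finset.subset_univ C) (f := fun i => A (π.symm i) (g i))]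
        refine add_le_add ?_ hkeyC
        refine le_of_eq (Finset.sum_congr rfl fun i hi => ?_)
        rw [hgnC i (Finset.mem_sdiff.1 hi).2]
      refine le_antisymm hle ?_
      calc tropDet A = ∑ j, A j (π j) := hπsum.symm
      _ = ∑ i, A (π.symm i) i := hre1
      _ ≤ ∑ i, A (π.symm i) (g i) := hgesum
      _ = ∑ j, A j ((π.trans τ) j) := hre2.symm

end TropAux

/-- A is tropically singular iff its columns are tropically linearly dependent:
there are scalars α_i, not all -∞, such that in each row j the maximum of
α_i + a_{ji} is attained at least twice. -/
theorem tropSingular_iff_columns_dependent (n : ℕ)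
    (A : Matrix (Fin (n + 1)) (Fin (n + 1)) (WithBot ℝ)) :
    TropSingular A ↔
      ∃ α : Fin (n + 1) → WithBot ℝ, (∃ i, α i ≠ ⊥) ∧
        ∀ j : Fin (n + 1), ∃ i₁ i₂ : Fin (n + 1), i₁ ≠ i₂ ∧
          α i₁ + A j i₁ = (Finset.univ.sup fun i => α i + A j i) ∧
          α i₂ + A j i₂ = (Finset.univ.sup fun i => α i + A j i) := by
  constructor
  · rintro ⟨π, σ, hπσ, hπ, hσ⟩
    have hj : ∃ j, π j ≠ σ j := by
      by_contra hcon
      push_neg at hcon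
      exact hπσ (Equiv.ext hcon)
    obtain ⟨j₀, hj₀⟩ := hj
    by_cases hD : tropDet A = ⊥
    · obtain ⟨α, hsupp, hrows⟩ := TropAux.dep_of_det_bot A hD (π j₀) (σ j₀) hj₀
      exact ⟨α, hsupp, hrows⟩
    · obtain ⟨α, hsupp, hrows⟩ := TropAux.dep_of_singular A π σ j₀ hj₀ hπ hσ hD
      exact ⟨α, hsupp, hrows⟩
  · rintro ⟨α, ⟨i0, hi0⟩, hrow⟩
    exact TropAux.singular_of_dep A α i0 hi0 hrow
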